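/- arXiv:math/0501233 — 4 statements merged into one kernel-verified Lean document; each statement's English description precedes it below -/
import Mathlib

section
/- Let p and q be coprime natural numbers. Then there exist permutation matrices P_r and P_c of size pq such that P_r · (F_p ⊗ F_q) · P_c = F_{pq}, where F_n denotes the n×n unitary Fourier matrix and ⊗ the Kronecker product. -/
open Matrix

/-- The unitary Fourier matrix of size `n` (0-based indexing):
`[F_n]_{i,j} = (1/√n)·exp(2πi·i·j/n)`. -/
noncomputable def Fourier (n : ℕ) : Matrix (Fin n) (Fin n) ℂ :=
  Matrix.of fun i j =>
    ((1 / Real.sqrt n : ℝ) : ℂ) *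
      Complex.exp (2 * Real.pi * Complex.I * ((i : ℕ) : ℂ) * ((j : ℕ) : ℂ) / n)

/-- Kronecker product of square complex matrices, realized on `Fin (m * n)`. -/
noncomputable def kron {m n : ℕ} (A : Matrix (Fin m) (Fin m) ℂ)
    (B : Matrix (Fin n) (Fin n) ℂ) : Matrix (Fin (m * n)) (Fin (m * n)) ℂ :=
  Matrix.of fun i j =>
    A (finProdFinEquiv.symm i).1 (finProdFinEquiv.symm j).1 *
      B (finProdFinEquiv.symm i).2 (finProdFinEquiv.symm j).2

/-- Kronecker product of row vectors. -/
noncomputable def kronVec {m n : ℕ} (v : Fin m → ℂ) (w : Fin n → ℂ) : Fin (m * n) → ℂ :=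
  fun i => v (finProdFinEquiv.symm i).1 * w (finProdFinEquiv.symm i).2

/-- Kronecker product of the Fourier matrices of the sizes in the list `L`. -/
noncomputable def kronFourier : (L : List ℕ) → Matrix (Fin L.prod) (Fin L.prod) ℂ
  | [] => 1
  | n :: t => kron (Fourier n) (kronFourier t)

open Classical in
/-- `v` is a row of length `N` whose entries are `(1/√N)` times the `n`-th roots of
unity, each occurring `N / n` times. -/
def RowVals (N n : ℕ) (v : Fin N → ℂ) : Prop :=
  ∀ t : Fin n,
    (Finset.univ.filter fun j =>
      v j = ((1 / Real.sqrt N : ℝ) : ℂ) *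
        Complex.exp (2 * Real.pi * Complex.I * ((t : ℕ) : ℂ) / n)).card = N / n

open Classical in
/-- Number of rows of the square matrix `M` that are of "type `n`", i.e. consist of
`(1/√N)` times the `n`-th roots of unity, each occurring equally often. -/
noncomputable def countRows (N n : ℕ) (M : Matrix (Fin N) (Fin N) ℂ) : ℕ :=
  (Finset.univ.filter fun i : Fin N => RowVals N n (M i)).card

/-- `P` is a permutation matrix. -/
def IsPermMatrix {α : Type*} [DecidableEq α] (P : Matrix α α ℂ) : Prop :=
  ∃ σ : Equiv.Perm α, ∀ i j, P i j = if σ j = i then (1 : ℂ) else 0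

/-- `D` is a unitary diagonal matrix. -/
def IsUnitaryDiag {α : Type*} [DecidableEq α] (D : Matrix α α ℂ) : Prop :=
  ∃ d : α → ℂ, (∀ i, ‖d i‖ = 1) ∧ D = Matrix.diagonal d

noncomputable def permMat {N : ℕ} (σ : Equiv.Perm (Fin N)) : Matrix (Fin N) (Fin N) ℂ :=
  Matrix.of fun i j => if σ j = i then 1 else 0

lemma permMat_mul_apply {N : ℕ} (σ : Equiv.Perm (Fin N)) (M : Matrix (Fin N) (Fin N) ℂ)
    (i j : Fin N) : (permMat σ * M) i j = M (σ.symm i) j := by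
  simp only [permMat, Matrix.mul_apply, Matrix.of_apply, ite_mul, one_mul, zero_mul]
  rw [Finset.sum_eq_single (σ.symm i)]
  · simp
  · intro k _ hk; rw [if_neg]; intro h; exact hk (by simp [← h])
  · simp

lemma mul_permMat_apply {N : ℕ} (σ : Equiv.Perm (Fin N)) (M : Matrix (Fin N) (Fin N) ℂ)
    (i j : Fin N) : (M * permMat σ) i j = M i (σ j) := by
  simp only [permMat, Matrix.mul_apply, Matrix.of_apply, mul_ite, mul_one, mul_zero]
  rw [Finset.sum_eq_single (σ j)]
  · simp
  · intro k _ hk; rw [if_neg fun h => hk h.symm]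
  · simp

-- divisibility key
lemma keydvd (p q : ℕ) (hp : 0 < p) (hq : 0 < q) {A B : ℤ} (hbez : (p:ℤ)*A + q*B = 1)
    (i j : ℕ) :
    ∃ k : ℤ, (q:ℤ) * ((i % p : ℕ) * (((B % p).toNat * j) % p : ℕ))
      + (p:ℤ) * ((i % q : ℕ) * (((A % q).toNat * j) % q : ℕ)) - i*j = k * (p*q) := by
  rw [← dvd_iff_exists_eq_mul_left]
  have hcop : IsCoprime (p:ℤ) (q:ℤ) := ⟨A, B, by linarith⟩
  apply hcop.mul_dvd
  · rw [← ZMod.intCast_zmod_eq_zero_iff_dvd]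
    have hB' : (((B % p).toNat : ℤ) : ZMod p) = (B : ZMod p) := by
      rw [Int.toNat_of_nonneg (Int.emod_nonneg B (by exact_mod_cast hp.ne'))]
      exact ZMod.intCast_mod B p
    have hqB : (q : ZMod p) * (B : ZMod p) = 1 := by
      have := congrArg (Int.cast : ℤ → ZMod p) hbez
      push_cast at this
      rwa [ZMod.natCast_self, zero_mul, zero_add] at this
    push_cast [ZMod.natCast_mod, ZMod.natCast_self]
    push_cast at hB'
    rw [hB']
    linear_combination ((i:ZMod p) * j) * hqB
  · rw [← ZMod.intCast_zmod_eq_zero_iff_dvd]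
    have hA' : (((A % q).toNat : ℤ) : ZMod q) = (A : ZMod q) := by
      rw [Int.toNat_of_nonneg (Int.emod_nonneg A (by exact_mod_cast hq.ne'))]
      exact ZMod.intCast_mod A q
    have hpA : (p : ZMod q) * (A : ZMod q) = 1 := by
      have := congrArg (Int.cast : ℤ → ZMod q) hbez
      push_cast at this
      rwa [ZMod.natCast_self, zero_mul, add_zero] at this
    push_cast [ZMod.natCast_mod, ZMod.natCast_self]
    push_cast at hA'
    rw [hA']
    linear_combination ((i:ZMod q) * j) * hpA

lemma keyentry (p q : ℕ) (hp : 0 < p) (hq : 0 < q) {A B : ℤ} (hbez : (p:ℤ)*A + q*B = 1)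
    (i j : ℕ) :
    ((1 / Real.sqrt p : ℝ) : ℂ) *
        Complex.exp (2 * Real.pi * Complex.I * ((i % p : ℕ) : ℂ) * ((((B % p).toNat * j) % p : ℕ) : ℂ) / p) *
      (((1 / Real.sqrt q : ℝ) : ℂ) *
        Complex.exp (2 * Real.pi * Complex.I * ((i % q : ℕ) : ℂ) * ((((A % q).toNat * j) % q : ℕ) : ℂ) / q))
    = ((1 / Real.sqrt (p*q) : ℝ) : ℂ) *
        Complex.exp (2 * Real.pi * Complex.I * (i : ℂ) * (j : ℂ) / ((p*q : ℕ) : ℂ)) := by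
  obtain ⟨k, hk⟩ := keydvd p q hp hq hbez i j
  set r1 : ℕ := i % p
  set c1 : ℕ := ((B % p).toNat * j) % p
  set r2 : ℕ := i % q
  set c2 : ℕ := ((A % q).toNat * j) % q
  have hkC : (q:ℂ) * ((r1:ℂ) * c1) + (p:ℂ) * ((r2:ℂ) * c2) - (i:ℂ)*j = (k:ℂ) * ((p:ℂ)*q) := by
    exact_mod_cast congrArg (Int.cast : ℤ → ℂ) hk
  have hpC : (p:ℂ) ≠ 0 := by exact_mod_cast hp.ne'
  have hqC : (q:ℂ) ≠ 0 := by exact_mod_cast hq.ne'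
  have hs : ((1 / Real.sqrt p : ℝ) : ℂ) * ((1 / Real.sqrt q : ℝ) : ℂ)
      = ((1 / Real.sqrt ((p*q : ℕ) : ℝ) : ℝ) : ℂ) := by
    rw [← Complex.ofReal_mul]
    congr 1
    rw [Nat.cast_mul, Real.sqrt_mul (by positivity)]
    ring
  have hE : ((r1:ℂ)*c1)/p + ((r2:ℂ)*c2)/q = (i:ℂ)*j/((p:ℂ)*q) + (k:ℂ) := by
    field_simp
    linear_combination hkC
  have h1 : 2 * (Real.pi:ℂ) * Complex.I * (r1:ℂ) * (c1:ℂ) / p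
        + 2 * (Real.pi:ℂ) * Complex.I * (r2:ℂ) * (c2:ℂ) / q
      = 2 * (Real.pi:ℂ) * Complex.I * (i:ℂ) * (j:ℂ) / ((p:ℂ)*q) + (k:ℂ) * (2 * (Real.pi:ℂ) * Complex.I) := by
    calc 2 * (Real.pi:ℂ) * Complex.I * (r1:ℂ) * (c1:ℂ) / p
        + 2 * (Real.pi:ℂ) * Complex.I * (r2:ℂ) * (c2:ℂ) / q
        = 2 * (Real.pi:ℂ) * Complex.I * (((r1:ℂ)*c1)/p + ((r2:ℂ)*c2)/q) := by ring
      _ = 2 * (Real.pi:ℂ) * Complex.I * ((i:ℂ)*j/((p:ℂ)*q) + (k:ℂ)) := by rw [hE]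
      _ = _ := by ring
  rw [show (((p*q : ℕ)) : ℂ) = (p:ℂ)*(q:ℂ) by push_cast; ring]
  calc ((1 / Real.sqrt p : ℝ) : ℂ) * Complex.exp (2 * (Real.pi:ℂ) * Complex.I * (r1:ℂ) * (c1:ℂ) / p) *
      (((1 / Real.sqrt q : ℝ) : ℂ) * Complex.exp (2 * (Real.pi:ℂ) * Complex.I * (r2:ℂ) * (c2:ℂ) / q))
      = (((1 / Real.sqrt p : ℝ) : ℂ) * ((1 / Real.sqrt q : ℝ) : ℂ)) *
        Complex.exp (2 * (Real.pi:ℂ) * Complex.I * (r1:ℂ) * (c1:ℂ) / p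
          + 2 * (Real.pi:ℂ) * Complex.I * (r2:ℂ) * (c2:ℂ) / q) := by
        rw [Complex.exp_add]; ring
    _ = ((1 / Real.sqrt ((p*q : ℕ) : ℝ) : ℝ) : ℂ) *
        Complex.exp (2 * (Real.pi:ℂ) * Complex.I * (i:ℂ) * (j:ℂ) / ((p:ℂ)*q)) := by
        rw [hs, h1, Complex.exp_add, Complex.exp_int_mul_two_pi_mul_I, mul_one]
    _ = ((1 / Real.sqrt ((p:ℝ) * (q:ℝ)) : ℝ) : ℂ) *
        Complex.exp (2 * (Real.pi:ℂ) * Complex.I * (i:ℂ) * (j:ℂ) / ((p:ℂ)*q)) := by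
        norm_cast

/-- for coprime `p, q` there are permutation matrices `P, Q` with
`P · (F_p ⊗ F_q) · Q = F_{pq}`. -/
theorem stmt5 (p q : ℕ) (hpq : Nat.Coprime p q) :
    ∃ P Q : Matrix (Fin (p * q)) (Fin (p * q)) ℂ,
      IsPermMatrix P ∧ IsPermMatrix Q ∧
      P * kron (Fourier p) (Fourier q) * Q = Fourier (p * q) := by
  by_cases h0 : p * q = 0
  · refine ⟨1, 1, ⟨Equiv.refl _, fun i j => by simp [Matrix.one_apply, eq_comm]⟩,
      ⟨Equiv.refl _, fun i j => by simp [Matrix.one_apply, eq_comm]⟩, ?_⟩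
    ext i j
    exact absurd i.2 (by omega)
  have hp : 0 < p := Nat.pos_of_ne_zero fun h => h0 (by simp [h])
  have hq : 0 < q := Nat.pos_of_ne_zero fun h => h0 (by simp [h])
  set A := Nat.gcdA p q with hA
  set B := Nat.gcdB p q with hB
  have hbez : (p:ℤ)*A + q*B = 1 := by
    have h := Nat.gcd_eq_gcd_ab p q
    rw [hpq] at h
    push_cast at h
    linarith
  let rmap : Fin (p*q) → Fin (p*q) := fun i =>
    finProdFinEquiv (⟨i % p, Nat.mod_lt _ hp⟩, ⟨i % q, Nat.mod_lt _ hq⟩)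
  let cmap : Fin (p*q) → Fin (p*q) := fun j =>
    finProdFinEquiv (⟨(B % p).toNat * j % p, Nat.mod_lt _ hp⟩,
      ⟨(A % q).toNat * j % q, Nat.mod_lt _ hq⟩)
  have hrinj : Function.Injective rmap := by
    intro x y hxy
    simp only [rmap, EmbeddingLike.apply_eq_iff_eq, Prod.mk.injEq, Fin.mk.injEq] at hxy
    obtain ⟨h1, h2⟩ := hxy
    have hm : (x:ℕ) ≡ y [MOD p*q] := (Nat.modEq_and_modEq_iff_modEq_mul hpq).mp ⟨h1, h2⟩
    exact Fin.ext (by rwa [Nat.ModEq, Nat.mod_eq_of_lt x.isLt, Nat.mod_eq_of_lt y.isLt] at hm)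
  have hB' : (((B % p).toNat : ℕ) : ZMod p) = (B : ZMod p) := by
    have : (((B % p).toNat : ℤ) : ZMod p) = (B : ZMod p) := by
      rw [Int.toNat_of_nonneg (Int.emod_nonneg B (by exact_mod_cast hp.ne'))]
      exact ZMod.intCast_mod B p
    exact_mod_cast this
  have hA' : (((A % q).toNat : ℕ) : ZMod q) = (A : ZMod q) := by
    have : (((A % q).toNat : ℤ) : ZMod q) = (A : ZMod q) := by
      rw [Int.toNat_of_nonneg (Int.emod_nonneg A (by exact_mod_cast hq.ne'))]
      exact ZMod.intCast_mod A q
    exact_mod_cast this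
  have hqB : (q : ZMod p) * (B : ZMod p) = 1 := by
    have := congrArg (Int.cast : ℤ → ZMod p) hbez
    push_cast at this
    rwa [ZMod.natCast_self, zero_mul, zero_add] at this
  have hpA : (p : ZMod q) * (A : ZMod q) = 1 := by
    have := congrArg (Int.cast : ℤ → ZMod q) hbez
    push_cast at this
    rwa [ZMod.natCast_self, zero_mul, add_zero] at this
  have hcinj : Function.Injective cmap := by
    intro x y hxy
    simp only [cmap, EmbeddingLike.apply_eq_iff_eq, Prod.mk.injEq, Fin.mk.injEq] at hxy
    obtain ⟨h1, h2⟩ := hxy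
    have e1 : ((x:ℕ) : ZMod p) = ((y:ℕ) : ZMod p) := by
      have := congrArg (Nat.cast : ℕ → ZMod p) h1
      rw [ZMod.natCast_mod, ZMod.natCast_mod, Nat.cast_mul, Nat.cast_mul, hB'] at this
      calc ((x:ℕ) : ZMod p) = ((q:ZMod p) * B) * x := by rw [hqB, one_mul]
        _ = (q:ZMod p) * ((B : ZMod p) * x) := by ring
        _ = (q:ZMod p) * ((B : ZMod p) * y) := by rw [this]
        _ = ((q:ZMod p) * B) * y := by ring
        _ = ((y:ℕ) : ZMod p) := by rw [hqB, one_mul]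
    have e2 : ((x:ℕ) : ZMod q) = ((y:ℕ) : ZMod q) := by
      have := congrArg (Nat.cast : ℕ → ZMod q) h2
      rw [ZMod.natCast_mod, ZMod.natCast_mod, Nat.cast_mul, Nat.cast_mul, hA'] at this
      calc ((x:ℕ) : ZMod q) = ((p:ZMod q) * A) * x := by rw [hpA, one_mul]
        _ = (p:ZMod q) * ((A : ZMod q) * x) := by ring
        _ = (p:ZMod q) * ((A : ZMod q) * y) := by rw [this]
        _ = ((p:ZMod q) * A) * y := by ring
        _ = ((y:ℕ) : ZMod q) := by rw [hpA, one_mul]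
    have m1 : (x:ℕ) ≡ y [MOD p] := (ZMod.natCast_eq_natCast_iff _ _ _).mp e1
    have m2 : (x:ℕ) ≡ y [MOD q] := (ZMod.natCast_eq_natCast_iff _ _ _).mp e2
    have hm : (x:ℕ) ≡ y [MOD p*q] := (Nat.modEq_and_modEq_iff_modEq_mul hpq).mp ⟨m1, m2⟩
    exact Fin.ext (by rwa [Nat.ModEq, Nat.mod_eq_of_lt x.isLt, Nat.mod_eq_of_lt y.isLt] at hm)
  let er : Equiv.Perm (Fin (p*q)) := Equiv.ofBijective rmap (Finite.injective_iff_bijective.mp hrinj)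
  let ec : Equiv.Perm (Fin (p*q)) := Equiv.ofBijective cmap (Finite.injective_iff_bijective.mp hcinj)
  refine ⟨permMat er.symm, permMat ec, ⟨er.symm, fun i j => rfl⟩, ⟨ec, fun i j => rfl⟩, ?_⟩
  ext i j
  rw [mul_permMat_apply, permMat_mul_apply, Equiv.symm_symm]
  show kron (Fourier p) (Fourier q) (rmap i) (cmap j) = Fourier (p * q) i j
  simp only [kron, rmap, cmap, Matrix.of_apply, Equiv.symm_apply_apply, Fourier]
  exact_mod_cast keyentry p q hp hq hbez i j
end

section
/- Let p, q be coprime, and choose integers a,b,c,d with a,c coprime to p, b,d coprime to q, satisfying acq ≡ 1 (mod p) and bdp ≡ 1 (mod q). Then for all ĩ, j̃ ∈ {0,...,pq-1}: ĩ·j̃ ≡ q·(aĩ mod p)(cj̃ mod p) + p·(bĩ mod q)(dj̃ mod q) (mod pq). -/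
open Matrix

/-- the index congruence `ĩ·j̃ ≡ q(aĩ mod p)(cj̃ mod p) + p(bĩ mod q)(dj̃ mod q)
(mod pq)`. -/
theorem stmt6 (p q a b c d : ℤ) (hp : 0 < p) (hq : 0 < q) (hpq : IsCoprime p q)
    (hap : IsCoprime a p) (hcp : IsCoprime c p) (hbq : IsCoprime b q) (hdq : IsCoprime d q)
    (h1 : a * c * q ≡ 1 [ZMOD p]) (h2 : b * d * p ≡ 1 [ZMOD q])
    (i j : ℤ) (hi0 : 0 ≤ i) (hi : i < p * q) (hj0 : 0 ≤ j) (hj : j < p * q) :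
    i * j ≡ q * ((a * i) % p) * ((c * j) % p) + p * ((b * i) % q) * ((d * j) % q)
      [ZMOD (p * q)] := by
  have hg : Int.gcd p q = 1 := Int.isCoprime_iff_gcd_eq_one.mp hpq
  have hmod : ∀ x n : ℤ, x % n ≡ x [ZMOD n] := fun x n => Int.emod_emod_of_dvd _ dvd_rfl
  refine (Int.modEq_and_modEq_iff_modEq_mul hg).mp ⟨?_, ?_⟩
  · have hT : (p : ℤ) ∣ p * ((b * i) % q) * ((d * j) % q) := ⟨((b * i) % q) * ((d * j) % q), by ring⟩
    calc i * j ≡ (a * c * q) * (i * j) [ZMOD p] := by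
          conv_lhs => rw [← one_mul (i * j)]
          exact (h1.symm.mul_right _)
      _ = q * (a * i) * (c * j) := by ring
      _ ≡ q * ((a * i) % p) * ((c * j) % p) [ZMOD p] :=
          Int.ModEq.mul (Int.ModEq.mul_left _ (hmod _ _).symm) (hmod _ _).symm
      _ ≡ q * ((a * i) % p) * ((c * j) % p) + p * ((b * i) % q) * ((d * j) % q) [ZMOD p] := by
          simpa using Int.ModEq.add_left (q * ((a * i) % p) * ((c * j) % p))
            (Int.modEq_zero_iff_dvd.mpr hT).symm
  · have hT : (q : ℤ) ∣ q * ((a * i) % p) * ((c * j) % p) := ⟨((a * i) % p) * ((c * j) % p), by ring⟩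
    calc i * j ≡ (b * d * p) * (i * j) [ZMOD q] := by
          conv_lhs => rw [← one_mul (i * j)]
          exact (h2.symm.mul_right _)
      _ = p * (b * i) * (d * j) := by ring
      _ ≡ p * ((b * i) % q) * ((d * j) % q) [ZMOD q] :=
          Int.ModEq.mul (Int.ModEq.mul_left _ (hmod _ _).symm) (hmod _ _).symm
      _ ≡ q * ((a * i) % p) * ((c * j) % p) + p * ((b * i) % q) * ((d * j) % q) [ZMOD q] := by
          rw [add_comm]
          simpa using Int.ModEq.add_left (p * ((b * i) % q) * ((d * j) % q))
            (Int.modEq_zero_iff_dvd.mpr hT).symm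
end

section
/- Let F = F_{a^{k_s}} ⊗ ⋯ ⊗ F_{a^{k_1}} be a Kronecker product of Fourier matrices with a prime and k_s ≥ ⋯ ≥ k_1 ≥ 1. Then every row of F is a row of type (a,k) for some 0 ≤ k ≤ k_s, i.e. its entries are (1/√N) times the a^k-th roots of unity each occurring N/a^k times, where N = a^{k_1+⋯+k_s}. -/
open Matrix

noncomputable def cN (N : ℕ) : ℂ := ((1 / Real.sqrt N : ℝ) : ℂ)

noncomputable def eN (n s : ℕ) : ℂ :=
  Complex.exp (2 * Real.pi * Complex.I * (s : ℂ) / (n : ℂ))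

lemma eN_eq_pow (n s : ℕ) : eN n s = Complex.exp (2 * Real.pi * Complex.I / n) ^ s := by
  rw [← Complex.exp_nat_mul]; unfold eN; congr 1; ring

lemma eN_mod (n : ℕ) (hn : n ≠ 0) (s : ℕ) : eN n s = eN n (s % n) := by
  rw [eN_eq_pow, eN_eq_pow]
  conv_lhs => rw [← Nat.div_add_mod s n]
  have h1 : Complex.exp (2 * Real.pi * Complex.I / n) ^ n = 1 := by
    rw [← Complex.exp_nat_mul,
      show (n : ℂ) * (2 * Real.pi * Complex.I / n) = 2 * Real.pi * Complex.I by
        have : (n : ℂ) ≠ 0 := Nat.cast_ne_zero.mpr hn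
        field_simp]
    exact Complex.exp_two_pi_mul_I
  rw [pow_add, pow_mul, h1, one_pow, one_mul]

lemma eN_add (n s t : ℕ) : eN n (s + t) = eN n s * eN n t := by
  unfold eN; rw [← Complex.exp_add]; congr 1; push_cast; ring

lemma eN_inj (n : ℕ) (hn : n ≠ 0) {s t : ℕ} (hs : s < n) (ht : t < n)
    (h : eN n s = eN n t) : s = t := by
  rw [eN_eq_pow, eN_eq_pow] at h
  exact (Complex.isPrimitiveRoot_exp n hn).pow_inj hs ht h

lemma eN_mul_left (B nq s : ℕ) (hB : B ≠ 0) (hnq : nq ≠ 0) :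
    eN (B * nq) (B * s) = eN nq s := by
  unfold eN
  congr 1
  have hB' : (B : ℂ) ≠ 0 := Nat.cast_ne_zero.mpr hB
  have hnq' : (nq : ℂ) ≠ 0 := Nat.cast_ne_zero.mpr hnq
  push_cast
  field_simp

noncomputable def ee (n : ℕ) (x : ZMod n) : ℂ := eN n x.val

lemma ee_natCast (n : ℕ) [NeZero n] (s : ℕ) : ee n ((s : ℕ) : ZMod n) = eN n s := by
  unfold ee
  rw [ZMod.val_natCast, ← eN_mod n (NeZero.ne n)]

lemma ee_add (n : ℕ) [NeZero n] (x y : ZMod n) : ee n (x + y) = ee n x * ee n y := by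
  conv_lhs => rw [← ZMod.natCast_rightInverse x, ← ZMod.natCast_rightInverse y,
    ← Nat.cast_add, ee_natCast]
  rw [eN_add]
  rfl

lemma ee_inj (n : ℕ) [NeZero n] : Function.Injective (ee n) := fun x y h =>
  ZMod.val_injective n (eN_inj n (NeZero.ne n) (ZMod.val_lt x) (ZMod.val_lt y) h)

lemma cN_ne_zero {N : ℕ} (hN : 0 < N) : cN N ≠ 0 := by
  unfold cN
  have : Real.sqrt N ≠ 0 := ne_of_gt (Real.sqrt_pos.mpr (by exact_mod_cast hN))
  simp [this]

lemma cN_mul (m n : ℕ) : cN m * cN n = cN (m * n) := by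
  unfold cN
  rw [← Complex.ofReal_mul]
  congr 1
  rw [div_mul_div_comm, one_mul, ← Real.sqrt_mul (Nat.cast_nonneg m)]
  push_cast
  ring_nf

lemma card_cast_fiber (n m : ℕ) [NeZero m] (hmn : m ∣ n) (c : ZMod m) :
    (Finset.univ.filter fun j : Fin n => ((j : ℕ) : ZMod m) = c).card = n / m := by
  have hm : 0 < m := Nat.pos_of_ne_zero (NeZero.ne m)
  have hiff : ∀ j : Fin n, (((j : ℕ) : ZMod m) = c) ↔ ((j : ℕ) % m = c.val) := by
    intro j
    constructor
    · intro h; rw [← h, ZMod.val_natCast]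
    · intro h
      have := congrArg (Nat.cast : ℕ → ZMod m) h
      rwa [ZMod.natCast_mod, ZMod.natCast_rightInverse c] at this
  rw [Finset.filter_congr fun j _ => by rw [hiff j]]
  rw [show n / m = (Finset.univ : Finset (Fin (n / m))).card by simp]
  apply Finset.card_nbij' (i := fun j : Fin n => (⟨(j : ℕ) / m, by
      exact Nat.div_lt_div_of_lt_of_dvd hmn j.isLt⟩ : Fin (n / m)))
    (j := fun l : Fin (n / m) => (⟨c.val + (l : ℕ) * m, by
      calc c.val + (l : ℕ) * m < m + (l : ℕ) * m := by
            exact Nat.add_lt_add_right (ZMod.val_lt c) _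
        _ = ((l : ℕ) + 1) * m := by ring
        _ ≤ (n / m) * m := Nat.mul_le_mul_right m (Nat.succ_le_of_lt l.isLt)
        _ = n := Nat.div_mul_cancel hmn⟩ : Fin n))
  · intro a _; exact Finset.mem_univ _
  · intro l _
    simp only [Finset.mem_coe, Finset.mem_filter, Finset.mem_univ, true_and]
    rw [Nat.add_mul_mod_self_right, Nat.mod_eq_of_lt (ZMod.val_lt c)]
  · intro j hj
    simp only [Finset.mem_coe, Finset.mem_filter, Finset.mem_univ, true_and] at hj
    apply Fin.ext
    simp only
    rw [← hj, mul_comm, Nat.mod_add_div]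
  · intro l _
    apply Fin.ext
    simp only
    rw [Nat.add_mul_div_right _ _ hm, Nat.div_eq_of_lt (ZMod.val_lt c), zero_add]

def HasExp (N n : ℕ) (v : Fin N → ℂ) (f : Fin N → ZMod n) : Prop :=
  (∀ j, v j = cN N * ee n (f j)) ∧
    ∀ t, (Finset.univ.filter fun j => f j = t).card = N / n

lemma rowVals_of_hasExp {N n : ℕ} (hN : 0 < N) (hn : 0 < n) {v : Fin N → ℂ}
    {f : Fin N → ZMod n} (h : HasExp N n v f) : RowVals N n v := by
  haveI : NeZero n := ⟨hn.ne'⟩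
  intro t
  have hval : ((1 / Real.sqrt N : ℝ) : ℂ) *
      Complex.exp (2 * Real.pi * Complex.I * ((t : ℕ) : ℂ) / n)
      = cN N * ee n (((t : ℕ) : ZMod n)) := by
    rw [ee_natCast]; rfl
  have hset : (Finset.univ.filter fun j =>
      v j = ((1 / Real.sqrt N : ℝ) : ℂ) *
        Complex.exp (2 * Real.pi * Complex.I * ((t : ℕ) : ℂ) / n))
      = Finset.univ.filter fun j => f j = (((t : ℕ) : ZMod n)) := by
    apply Finset.filter_congr
    intro j _
    rw [hval, h.1 j]
    constructor
    · intro hh; exact ee_inj n (mul_left_cancel₀ (cN_ne_zero hN) hh)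
    · intro hh; rw [hh]
  rw [hset, h.2]

lemma Fourier_entry (n : ℕ) (i j : Fin n) :
    Fourier n i j = cN n * eN n (i.val * j.val) := by
  unfold Fourier eN cN
  rw [Matrix.of_apply]
  congr 1
  congr 1
  push_cast
  ring

lemma fourier_row_hasExp (a : ℕ) (ha : a.Prime) (k : ℕ) (i : Fin (a ^ k)) :
    ∃ p ≤ k, ∃ f : Fin (a ^ k) → ZMod (a ^ p),
      HasExp (a ^ k) (a ^ p) (Fourier (a ^ k) i) f := by
  haveI : Fact a.Prime := ⟨ha⟩
  by_cases hi0 : (i : ℕ) = 0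
  · refine ⟨0, Nat.zero_le k, fun _ => 0, ?_, ?_⟩
    · intro j
      haveI : NeZero (a ^ 0) := ⟨pow_ne_zero _ ha.pos.ne'⟩
      rw [Fourier_entry, hi0]
      show cN (a ^ k) * eN (a ^ k) (0 * (j : ℕ)) = cN (a ^ k) * ee (a ^ 0) 0
      rw [zero_mul]
      congr 1
      show eN (a ^ k) 0 = eN (a ^ 0) (ZMod.val 0)
      rw [ZMod.val_zero]
      simp [eN]
    · intro t
      haveI : Subsingleton (ZMod (a ^ 0)) := by rw [pow_zero]; infer_instance
      have ht : (0 : ZMod (a ^ 0)) = t := Subsingleton.elim _ _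
      rw [← ht, Finset.filter_true_of_mem (fun _ _ => rfl)]; simp
  · set e := padicValNat a (i : ℕ) with he_def
    have he : a ^ e ∣ (i : ℕ) := pow_padicValNat_dvd
    have hnd : ¬ a ^ (e + 1) ∣ (i : ℕ) := pow_succ_padicValNat_not_dvd hi0
    have hek : e < k := by
      by_contra hco
      push_neg at hco
      have : a ^ k ∣ (i : ℕ) := dvd_trans (pow_dvd_pow a hco) he
      exact absurd (Nat.le_of_dvd (Nat.pos_of_ne_zero hi0) this) (not_le.mpr i.isLt)
    set p := k - e with hp_def
    have hpk : p ≤ k := Nat.sub_le k e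
    have hk : k = e + p := by omega
    obtain ⟨u, hu⟩ := he
    have hau : ¬ a ∣ u := by
      intro h
      exact hnd (by rw [hu, pow_succ]; exact mul_dvd_mul_left _ h)
    have hcop : Nat.Coprime u (a ^ p) :=
      Nat.Coprime.pow_right p ((Nat.Prime.coprime_iff_not_dvd ha).mpr hau).symm
    haveI : NeZero (a ^ p) := ⟨pow_ne_zero _ ha.pos.ne'⟩
    have hUnit : IsUnit ((u : ZMod (a ^ p))) := (ZMod.isUnit_iff_coprime u (a ^ p)).mpr hcop
    obtain ⟨U, hUu⟩ := hUnit
    refine ⟨p, hpk, fun j => (u : ZMod (a ^ p)) * (((j : ℕ) : ZMod (a ^ p))), ?_, ?_⟩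
    · intro j
      rw [Fourier_entry]
      congr 1
      show eN (a ^ k) ((i : ℕ) * (j : ℕ)) = ee (a ^ p) ((u : ZMod (a ^ p)) * (((j : ℕ) : ZMod (a ^ p))))
      have hcast : ((u : ZMod (a ^ p)) * (((j : ℕ) : ZMod (a ^ p)))) = (((u * (j : ℕ) : ℕ) : ZMod (a ^ p))) := by
        push_cast; ring
      rw [hcast, ee_natCast, hu, mul_assoc]
      have hpow : a ^ k = a ^ e * a ^ p := by rw [← pow_add, ← hk]
      generalize u * (j : ℕ) = s
      rw [hpow]
      exact eN_mul_left (a ^ e) (a ^ p) s (pow_ne_zero _ ha.pos.ne')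
        (pow_ne_zero _ ha.pos.ne')
    · intro t
      have hiff : ∀ j : Fin (a ^ k),
          ((u : ZMod (a ^ p)) * (((j : ℕ) : ZMod (a ^ p))) = t) ↔
            (((j : ℕ) : ZMod (a ^ p)) = (↑U⁻¹ * t : ZMod (a ^ p))) := by
        intro j
        rw [← hUu]
        exact (Units.eq_inv_mul_iff_mul_eq U).symm
      rw [Finset.filter_congr fun j _ => by rw [hiff j]]
      exact card_cast_fiber (a ^ k) (a ^ p) (pow_dvd_pow a hpk) _

lemma ee_lift {a p q : ℕ} (ha : a ≠ 0) (hqp : q ≤ p) (x : ZMod (a ^ q)) :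
    ee (a ^ q) x = ee (a ^ p) (((a ^ (p - q) * x.val : ℕ) : ZMod (a ^ p))) := by
  haveI : NeZero (a ^ p) := ⟨pow_ne_zero _ ha⟩
  rw [ee_natCast]
  show eN (a ^ q) x.val = eN (a ^ p) (a ^ (p - q) * x.val)
  have hpow : a ^ p = a ^ (p - q) * a ^ q := by rw [← pow_add]; congr 1; omega
  rw [hpow]
  exact (eN_mul_left _ _ _ (pow_ne_zero _ ha) (pow_ne_zero _ ha)).symm

lemma card_filter_prod {m n : ℕ} (P : Fin (m * n) → Prop) [DecidablePred P] :
    (Finset.univ.filter P).card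
      = (Finset.univ.filter fun z : Fin m × Fin n => P (finProdFinEquiv z)).card := by
  refine Finset.card_nbij' (fun j => finProdFinEquiv.symm j)
    (fun z => finProdFinEquiv z) ?_ ?_ ?_ ?_
  · intro x hx
    simp only [Finset.mem_coe, Finset.mem_filter, Finset.mem_univ, true_and] at *
    rwa [Equiv.apply_symm_apply]
  · intro z hz
    simpa only [Finset.mem_coe, Finset.mem_filter, Finset.mem_univ, true_and,
      Equiv.symm_apply_apply] using hz
  · intro x _
    exact Equiv.apply_symm_apply _ _
  · intro z _
    exact Equiv.symm_apply_apply _ _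

lemma kron_hasExp_left {a m n p q : ℕ} (ha : a ≠ 0) (hqp : q ≤ p) (hm : a ^ p ∣ m)
    {v : Fin m → ℂ} {w : Fin n → ℂ} {f : Fin m → ZMod (a ^ p)} {g : Fin n → ZMod (a ^ q)}
    (hv : HasExp m (a ^ p) v f) (hw : HasExp n (a ^ q) w g) :
    ∃ h, HasExp (m * n) (a ^ p) (kronVec v w) h := by
  haveI : NeZero (a ^ p) := ⟨pow_ne_zero _ ha⟩
  have hpos : 0 < a ^ p := Nat.pos_of_ne_zero (pow_ne_zero _ ha)
  set c : Fin n → ZMod (a ^ p) :=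
    fun y => ((a ^ (p - q) * (g y).val : ℕ) : ZMod (a ^ p)) with hc
  refine ⟨fun j => f (finProdFinEquiv.symm j).1 + c (finProdFinEquiv.symm j).2, ?_, ?_⟩
  · intro j
    show v _ * w _ = _
    rw [hv.1, hw.1, ee_add, ee_lift ha hqp (g _), ← cN_mul]
    ring
  · intro t
    rw [card_filter_prod]
    rw [Finset.filter_congr (q := fun z : Fin m × Fin n => f z.1 = t - c z.2)
      fun z _ => by
        show f (finProdFinEquiv.symm (finProdFinEquiv z)).1
            + c (finProdFinEquiv.symm (finProdFinEquiv z)).2 = t ↔ _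
        rw [Equiv.symm_apply_apply]
        exact eq_sub_iff_add_eq.symm]
    rw [Finset.card_filter, Fintype.sum_prod_type_right]
    have inner : ∀ y : Fin n, (∑ x : Fin m, if f x = t - c y then 1 else 0) = m / a ^ p := by
      intro y
      rw [← Finset.card_filter]
      exact hv.2 _
    calc (∑ y : Fin n, ∑ x : Fin m, if f x = t - c y then 1 else 0)
        = ∑ _y : Fin n, m / a ^ p := Finset.sum_congr rfl fun y _ => inner y
      _ = n * (m / a ^ p) := by
          rw [Finset.sum_const, Finset.card_univ, Fintype.card_fin, smul_eq_mul]
      _ = m * n / a ^ p := by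
          obtain ⟨d, rfl⟩ := hm
          rw [Nat.mul_div_cancel_left d hpos, mul_assoc, Nat.mul_div_cancel_left _ hpos,
            mul_comm]

lemma kron_hasExp_right {a m n p q : ℕ} (ha : a ≠ 0) (hpq : p ≤ q) (hn : a ^ q ∣ n)
    {v : Fin m → ℂ} {w : Fin n → ℂ} {f : Fin m → ZMod (a ^ p)} {g : Fin n → ZMod (a ^ q)}
    (hv : HasExp m (a ^ p) v f) (hw : HasExp n (a ^ q) w g) :
    ∃ h, HasExp (m * n) (a ^ q) (kronVec v w) h := by
  haveI : NeZero (a ^ q) := ⟨pow_ne_zero _ ha⟩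
  have hpos : 0 < a ^ q := Nat.pos_of_ne_zero (pow_ne_zero _ ha)
  set c : Fin m → ZMod (a ^ q) :=
    fun x => ((a ^ (q - p) * (f x).val : ℕ) : ZMod (a ^ q)) with hc
  refine ⟨fun j => c (finProdFinEquiv.symm j).1 + g (finProdFinEquiv.symm j).2, ?_, ?_⟩
  · intro j
    show v _ * w _ = _
    rw [hv.1, hw.1, ee_add, ee_lift ha hpq (f _), ← cN_mul]
    ring
  · intro t
    rw [card_filter_prod]
    rw [Finset.filter_congr (q := fun z : Fin m × Fin n => g z.2 = t - c z.1)
      fun z _ => by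
        show c (finProdFinEquiv.symm (finProdFinEquiv z)).1
            + g (finProdFinEquiv.symm (finProdFinEquiv z)).2 = t ↔ _
        rw [Equiv.symm_apply_apply, add_comm]
        exact eq_sub_iff_add_eq.symm]
    rw [Finset.card_filter, Fintype.sum_prod_type]
    have inner : ∀ x : Fin m, (∑ y : Fin n, if g y = t - c x then 1 else 0) = n / a ^ q := by
      intro x
      rw [← Finset.card_filter]
      exact hw.2 _
    calc (∑ x : Fin m, ∑ y : Fin n, if g y = t - c x then 1 else 0)
        = ∑ _x : Fin m, n / a ^ q := Finset.sum_congr rfl fun x _ => inner x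
      _ = m * (n / a ^ q) := by
          rw [Finset.sum_const, Finset.card_univ, Fintype.card_fin, smul_eq_mul]
      _ = m * n / a ^ q := by
          obtain ⟨d, rfl⟩ := hn
          rw [Nat.mul_div_cancel_left d hpos, ← mul_assoc, mul_comm m (a ^ q), mul_assoc,
            Nat.mul_div_cancel_left _ hpos]

lemma key (a : ℕ) (ha : a.Prime) (L : List ℕ) :
    ∀ i : Fin ((L.map (a ^ ·)).prod),
      ∃ k ≤ L.foldr max 0, a ^ k ∣ (L.map (a ^ ·)).prod ∧
        ∃ f, HasExp ((L.map (a ^ ·)).prod) (a ^ k) (kronFourier (L.map (a ^ ·)) i) f := by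
  induction L with
  | nil =>
    intro i
    haveI : NeZero (a ^ 0) := ⟨pow_ne_zero _ ha.pos.ne'⟩
    haveI : Subsingleton (Fin ((List.map (a ^ ·) ([] : List ℕ)).prod)) := Fin.subsingleton_one
    refine ⟨0, le_refl 0, by simp, fun _ => 0, ?_, ?_⟩
    · intro j
      show (1 : Matrix (Fin ((List.map (a ^ ·) ([] : List ℕ)).prod)) (Fin ((List.map (a ^ ·) ([] : List ℕ)).prod)) ℂ) i j = _
      rw [Matrix.one_apply, if_pos (Subsingleton.elim i j)]
      show (1 : ℂ) = cN 1 * ee (a ^ 0) 0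
      have h1 : cN 1 = 1 := by simp [cN]
      have h2 : ee (a ^ 0) 0 = 1 := by
        show eN (a ^ 0) (ZMod.val 0) = 1
        rw [ZMod.val_zero]
        simp [eN]
      rw [h1, h2, one_mul]
    · intro t
      haveI : Subsingleton (ZMod (a ^ 0)) := by rw [pow_zero]; infer_instance
      have ht : (0 : ZMod (a ^ 0)) = t := Subsingleton.elim _ _
      rw [← ht, Finset.filter_true_of_mem (fun _ _ => rfl)]; simp
  | cons k₀ tl ih =>
    intro i
    obtain ⟨p, hpk, f, hf⟩ := fourier_row_hasExp a ha k₀ (finProdFinEquiv.symm i).1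
    obtain ⟨q, hq, hdvd, g, hg⟩ := ih (finProdFinEquiv.symm i).2
    rcases le_total q p with hqp | hpq
    · obtain ⟨h, hh⟩ := kron_hasExp_left ha.pos.ne' hqp (pow_dvd_pow a hpk) hf hg
      exact ⟨p, le_trans hpk (le_max_left _ _),
        dvd_mul_of_dvd_left (pow_dvd_pow a hpk) _, h, hh⟩
    · obtain ⟨h, hh⟩ := kron_hasExp_right ha.pos.ne' hpq hdvd hf hg
      exact ⟨q, le_trans hq (le_max_right _ _), Dvd.dvd.mul_left hdvd _, h, hh⟩


/-- every row of a pure ordered FFKP `F_{a^{k_s}} ⊗ ⋯ ⊗ F_{a^{k_1}}`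
is a row of type `(a,k)` for some `k ≤ k_s`. -/
theorem stmt9 (a : ℕ) (ha : a.Prime) (ks : List ℕ) (hk : ∀ k ∈ ks, 1 ≤ k)
    (hsort : ks.Pairwise (· ≥ ·)) (i : Fin ((ks.map (a ^ ·)).prod)) :
    ∃ k ≤ ks.foldr max 0,
      RowVals ((ks.map (a ^ ·)).prod) (a ^ k) (kronFourier (ks.map (a ^ ·)) i) := by
  obtain ⟨k, hkb, hdvd, f, hexp⟩ := key a ha ks i
  refine ⟨k, hkb, rowVals_of_hasExp ?_ (pow_pos ha.pos k) hexp⟩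
  apply List.prod_pos
  intro x hx
  simp only [List.mem_map] at hx
  obtain ⟨y, _, rfl⟩ := hx
  exact pow_pos ha.pos y
end

section
/- For a prime a and a pure ordered FFKP F = F_{a^{k_s}} ⊗ ⋯ ⊗ F_{a^{k_1}} (k_s ≥ ⋯ ≥ k_1): the number of rows of type (a,1) in F equals a^s − 1, and the number of rows of type (a,0) (all-constant rows) equals 1. -/
open Matrix

open Finset

def UnifZ (N m : ℕ) (g : Fin N → ZMod m) : Prop :=
  ∀ c : ZMod m, (univ.filter fun j => g j = c).card = N / m

lemma card_filter_equiv {α β : Type*} [Fintype α] [Fintype β] (e : α ≃ β)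
    (p : β → Prop) [DecidablePred p] :
    (univ.filter fun a => p (e a)).card = (univ.filter p).card := by
  apply Finset.card_nbij e (fun x hx => by simpa using hx) (e.injective.injOn)
  intro b hb
  simp only [coe_filter, Set.mem_setOf_eq, mem_univ, true_and] at hb ⊢
  exact ⟨e.symm b, by simpa using hb, by simp⟩

lemma hom_fiber {G H : Type*} [AddGroup G] [Fintype G] [DecidableEq G]
    [AddGroup H] [Fintype H] [DecidableEq H]
    (φ : G →+ H) (hφ : Function.Surjective φ) (b : H) :
    (univ.filter fun a => φ a = b).card = Fintype.card G / Fintype.card H := by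
  have key : ∀ b' : H, (univ.filter fun a => φ a = b').card
      = (univ.filter fun a => φ a = 0).card := by
    intro b'
    obtain ⟨a₀, ha₀⟩ := hφ b'
    apply Finset.card_nbij (fun a => a - a₀)
    · intro a hain
      simp only [mem_coe, mem_filter, mem_univ, true_and] at hain ⊢
      simp [map_sub, hain, ha₀]
    · intro x _ y _ h; simpa using h
    · intro x hx
      simp only [coe_filter, Set.mem_setOf_eq, mem_univ, true_and] at hx ⊢
      exact ⟨x + a₀, by simp [map_add, hx, ha₀], by simp⟩
  have hsum : Fintype.card G = ∑ b' : H, (univ.filter fun a => φ a = b').card := by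
    simpa using Finset.card_eq_sum_card_fiberwise (f := φ) (s := univ) (t := univ)
      (fun x _ => mem_univ _)
  have : Fintype.card G = Fintype.card H * (univ.filter fun a => φ a = 0).card := by
    rw [hsum]; simp [key, mul_comm]
  rw [key b, this, Nat.mul_div_cancel_left _ Fintype.card_pos]

lemma natcast_unif (n m : ℕ) (hn : 0 < n) (hm : 0 < m) (hmn : m ∣ n) :
    UnifZ n m (fun j : Fin n => ((j : ℕ) : ZMod m)) := by
  haveI : NeZero n := ⟨hn.ne'⟩
  haveI : NeZero m := ⟨hm.ne'⟩
  intro c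
  have hf : Function.Bijective (fun j : Fin n => ((j : ℕ) : ZMod n)) := by
    rw [Fintype.bijective_iff_injective_and_card]
    constructor
    · intro x y hxy
      have := congrArg ZMod.val hxy
      rw [ZMod.val_cast_of_lt x.2, ZMod.val_cast_of_lt y.2] at this
      exact Fin.ext this
    · simp [ZMod.card]
  have : (univ.filter fun j : Fin n => ((j : ℕ) : ZMod m) = c).card
      = (univ.filter fun x : ZMod n => (ZMod.castHom hmn (ZMod m)).toAddMonoidHom x = c).card := by
    rw [← card_filter_equiv (Equiv.ofBijective _ hf)]
    congr 1
    apply Finset.filter_congr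
    intro j _
    simp [Equiv.ofBijective]
  rw [this, hom_fiber _ (fun x => ⟨((x.val : ℕ) : ZMod n), by simp⟩)]
  simp [ZMod.card]

-- helper: exp(2πi r / m) only depends on r mod m
lemma exp_ratio (m : ℕ) (hm : 0 < m) (r : ℕ) :
    Complex.exp (2 * Real.pi * Complex.I * (r : ℂ) / m)
      = Complex.exp (2 * Real.pi * Complex.I * ((r % m : ℕ) : ℂ) / m) := by
  have hm0 : (m : ℂ) ≠ 0 := Nat.cast_ne_zero.mpr hm.ne'
  have hr : (r : ℂ) = (m : ℂ) * ((r / m : ℕ) : ℂ) + ((r % m : ℕ) : ℂ) := by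
    exact_mod_cast (Nat.div_add_mod r m).symm
  rw [Complex.exp_eq_exp_iff_exists_int]
  refine ⟨((r / m : ℕ) : ℤ), ?_⟩
  rw [Int.cast_natCast]
  field_simp
  linear_combination hr

lemma two_pi_I_ne : (2 : ℂ) * Real.pi * Complex.I ≠ 0 := by
  simp [Real.pi_ne_zero, Complex.I_ne_zero, Complex.ofReal_ne_zero]

-- cross-multiplication criterion for equality of exp values
lemma exp_eq_exp_iff (m n v t : ℕ) (hm : 0 < m) (hn : 0 < n) (hv : v < m) (ht : t < n) :
    Complex.exp (2 * Real.pi * Complex.I * (v : ℂ) / m)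
      = Complex.exp (2 * Real.pi * Complex.I * (t : ℂ) / n) ↔ n * v = t * m := by
  have hm0 : (m : ℂ) ≠ 0 := Nat.cast_ne_zero.mpr hm.ne'
  have hn0 : (n : ℂ) ≠ 0 := Nat.cast_ne_zero.mpr hn.ne'
  have hmr : (0:ℝ) < m := by exact_mod_cast hm
  have hnr : (0:ℝ) < n := by exact_mod_cast hn
  constructor
  · intro h
    rw [Complex.exp_eq_exp_iff_exists_int] at h
    obtain ⟨k, hk⟩ := h
    have h3 : (2 * Real.pi * Complex.I) * ((v : ℂ)/m - (t : ℂ)/n - k) = 0 := by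
      field_simp
      field_simp at hk
      linear_combination (2 * (Real.pi : ℂ) * Complex.I) * hk
    have h4 : ((v : ℂ)/m - (t : ℂ)/n - k) = 0 :=
      (mul_eq_zero.mp h3).resolve_left two_pi_I_ne
    have h5 : (v : ℝ)/m - (t : ℝ)/n = (k : ℝ) := by
      have hz : (((v:ℝ)/m - (t:ℝ)/n - (k:ℝ) : ℝ) : ℂ) = 0 := by
        push_cast
        linear_combination h4
      have := Complex.ofReal_eq_zero.mp hz
      linarith
    have hb2 : (v:ℝ) / m < 1 := by rw [div_lt_one hmr]; exact_mod_cast hv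
    have hb4 : (t:ℝ) / n < 1 := by rw [div_lt_one hnr]; exact_mod_cast ht
    have hb1 : (0:ℝ) ≤ (v:ℝ) / m := by positivity
    have hb3 : (0:ℝ) ≤ (t:ℝ) / n := by positivity
    have hk0 : k = 0 := by
      have l1 : (-1 : ℝ) < (k : ℝ) := by rw [← h5]; linarith
      have l2 : (k : ℝ) < 1 := by rw [← h5]; linarith
      have l1' : (-1 : ℤ) < k := by exact_mod_cast l1
      have l2' : k < (1 : ℤ) := by exact_mod_cast l2
      omega
    rw [hk0] at h5
    simp only [Int.cast_zero] at h5
    have h6 : (v : ℝ) / m = (t : ℝ) / n := by linarith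
    have h7 := (div_eq_div_iff hmr.ne' hnr.ne').mp h6
    exact_mod_cast (by push_cast; linarith : ((n * v : ℕ) : ℝ) = ((t * m : ℕ) : ℝ))
  · intro h
    have hc : (n : ℂ) * v = (t : ℂ) * m := by exact_mod_cast h
    congr 1
    rw [div_eq_div_iff hm0 hn0]
    linear_combination (2 * (Real.pi : ℂ) * Complex.I) * hc

lemma exp_cross (m n A B : ℕ) (hm : 0 < m) (hn : 0 < n) (h : A * m = B * n) :
    Complex.exp (2 * Real.pi * Complex.I * (A : ℂ) / n)
      = Complex.exp (2 * Real.pi * Complex.I * (B : ℂ) / m) := by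
  have hm0 : (m : ℂ) ≠ 0 := Nat.cast_ne_zero.mpr hm.ne'
  have hn0 : (n : ℂ) ≠ 0 := Nat.cast_ne_zero.mpr hn.ne'
  have hc : (A : ℂ) * m = (B : ℂ) * n := by exact_mod_cast h
  congr 1
  rw [div_eq_div_iff hn0 hm0]
  linear_combination (2 * (Real.pi : ℂ) * Complex.I) * hc

lemma fourier_row (n : ℕ) (hn : 0 < n) (i : Fin n) :
    ∃ g : Fin n → ZMod (n / Nat.gcd i n), UnifZ n (n / Nat.gcd i n) g ∧
      ∀ j, Fourier n i j = ((1 / Real.sqrt n : ℝ) : ℂ) *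
        Complex.exp (2 * Real.pi * Complex.I * (((g j).val : ℕ) : ℂ) / (n / Nat.gcd i n : ℕ)) := by
  set G := Nat.gcd (i : ℕ) n with hG
  set m := n / G with hmdef
  have hGn : G ∣ n := Nat.gcd_dvd_right _ _
  have hGi : G ∣ (i : ℕ) := Nat.gcd_dvd_left _ _
  have hG0 : 0 < G := Nat.gcd_pos_of_pos_right _ hn
  have hm : 0 < m := Nat.div_pos (Nat.le_of_dvd hn hGn) hG0
  have hmn : m ∣ n := Nat.div_dvd_of_dvd hGn
  haveI : NeZero m := ⟨hm.ne'⟩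
  set u := (i : ℕ) / G with hu
  have hco : Nat.Coprime u m := Nat.coprime_div_gcd_div_gcd hG0
  clear_value G m u
  refine ⟨fun j => ((u * (j : ℕ) : ℕ) : ZMod m), ?_, ?_⟩
  · intro c
    set U : (ZMod m)ˣ := ZMod.unitOfCoprime u hco with hU
    have hUc : (U : ZMod m) = (u : ZMod m) := rfl
    have key : ∀ j : Fin n, ((u * (j : ℕ) : ℕ) : ZMod m) = c ↔
        ((j : ℕ) : ZMod m) = (U⁻¹ : (ZMod m)ˣ) * c := by
      intro j
      rw [Nat.cast_mul, ← hUc]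
      constructor
      · intro h; rw [← h, ← mul_assoc, U.inv_mul, one_mul]
      · intro h; rw [h, ← mul_assoc, U.mul_inv, one_mul]
    rw [Finset.filter_congr (fun j _ => key j)]
    exact natcast_unif n m hn hm hmn _
  · intro j
    simp only [Fourier, Matrix.of_apply]
    congr 1
    have hin : (i : ℕ) = u * G := by rw [hu, Nat.div_mul_cancel hGi]
    have hnm : n = m * G := by rw [hmdef, Nat.div_mul_cancel hGn]
    have hcross : ((i : ℕ) * (j : ℕ)) * m = (u * (j : ℕ)) * n := by
      obtain ⟨jv, hjv⟩ : ∃ jv : ℕ, (j : ℕ) = jv := ⟨_, rfl⟩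
      rw [hjv, hin, hnm]; ring
    have e1 : Complex.exp (2 * Real.pi * Complex.I * ((i : ℕ) : ℂ) * ((j : ℕ) : ℂ) / n)
        = Complex.exp (2 * Real.pi * Complex.I * (((i : ℕ) * (j : ℕ) : ℕ) : ℂ) / n) := by
      congr 1; push_cast; ring
    rw [e1, exp_cross m n _ _ hm hn hcross, exp_ratio m hm]
    congr 2
    rw [ZMod.val_natCast]

section phi
variable (m₁ m₂ m : ℕ)

/-- The hom `ZMod m₁ →+ ZMod m` sending `1` to `m / m₁`. -/
noncomputable def upHom (h : m₁ ∣ m) : ZMod m₁ →+ ZMod m :=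
  ZMod.lift m₁ ⟨zmultiplesHom (ZMod m) ((m / m₁ : ℕ) : ZMod m), by
    simp only [zmultiplesHom_apply]
    rw [natCast_zsmul, nsmul_eq_mul, ← Nat.cast_mul, Nat.mul_div_cancel' h, ZMod.natCast_self]⟩

lemma upHom_apply (h : m₁ ∣ m) (x : ℕ) :
    upHom m₁ m h ((x : ℕ) : ZMod m₁) = ((x * (m / m₁) : ℕ) : ZMod m) := by
  have : ((x : ℕ) : ZMod m₁) = ((x : ℤ) : ZMod m₁) := by push_cast; rfl
  rw [this, upHom, ZMod.lift_coe]
  simp only [zmultiplesHom_apply]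
  rw [natCast_zsmul, nsmul_eq_mul, ← Nat.cast_mul]

/-- The combination hom `ZMod m₁ × ZMod m₂ →+ ZMod m`. -/
noncomputable def phiHom (h₁ : m₁ ∣ m) (h₂ : m₂ ∣ m) : ZMod m₁ × ZMod m₂ →+ ZMod m :=
  (upHom m₁ m h₁).coprod (upHom m₂ m h₂)

lemma phiHom_apply (h₁ : m₁ ∣ m) (h₂ : m₂ ∣ m) (x y : ℕ) :
    phiHom m₁ m₂ m h₁ h₂ (((x : ℕ) : ZMod m₁), ((y : ℕ) : ZMod m₂))
      = ((x * (m / m₁) + y * (m / m₂) : ℕ) : ZMod m) := by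
  rw [phiHom, AddMonoidHom.coprod_apply, upHom_apply, upHom_apply, ← Nat.cast_add]

lemma lcm_div_coprime (h₁ : 0 < m₁) (h₂ : 0 < m₂) :
    Nat.Coprime (Nat.lcm m₁ m₂ / m₁) (Nat.lcm m₁ m₂ / m₂) := by
  have hg : 0 < Nat.gcd m₁ m₂ := Nat.gcd_pos_of_pos_left _ h₁
  have e1 : Nat.lcm m₁ m₂ / m₁ = m₂ / Nat.gcd m₁ m₂ := by
    show m₁ * m₂ / Nat.gcd m₁ m₂ / m₁ = m₂ / Nat.gcd m₁ m₂
    rw [Nat.mul_div_assoc m₁ (Nat.gcd_dvd_right m₁ m₂), Nat.mul_div_cancel_left _ h₁]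
  have e2 : Nat.lcm m₁ m₂ / m₂ = m₁ / Nat.gcd m₁ m₂ := by
    rw [Nat.lcm_comm]
    show m₂ * m₁ / Nat.gcd m₂ m₁ / m₂ = m₁ / Nat.gcd m₁ m₂
    rw [Nat.mul_div_assoc m₂ (Nat.gcd_comm m₁ m₂ ▸ Nat.gcd_dvd_left m₁ m₂),
      Nat.mul_div_cancel_left _ h₂, Nat.gcd_comm]
  rw [e1, e2]
  exact (Nat.coprime_div_gcd_div_gcd hg).symm

lemma phiHom_surj (h₁ : 0 < m₁) (h₂ : 0 < m₂) (hm : 0 < m) (hlcm : m = Nat.lcm m₁ m₂)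
    (hd₁ : m₁ ∣ m) (hd₂ : m₂ ∣ m) :
    Function.Surjective (phiHom m₁ m₂ m hd₁ hd₂) := by
  haveI : NeZero m := ⟨hm.ne'⟩
  set u := m / m₁ with hudef
  set v := m / m₂ with hvdef
  have hco : Nat.Coprime u v := by
    rw [hudef, hvdef, hlcm]; exact lcm_div_coprime m₁ m₂ h₁ h₂
  have c1 : phiHom m₁ m₂ m hd₁ hd₂ (((1:ℕ) : ZMod m₁), ((0:ℕ) : ZMod m₂)) = ((u : ℕ) : ZMod m) := by
    rw [phiHom_apply]; norm_num; rfl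
  have c2 : phiHom m₁ m₂ m hd₁ hd₂ (((0:ℕ) : ZMod m₁), ((1:ℕ) : ZMod m₂)) = ((v : ℕ) : ZMod m) := by
    rw [phiHom_apply]; norm_num; rfl
  have hone : ∃ w, phiHom m₁ m₂ m hd₁ hd₂ w = 1 := by
    refine ⟨(Nat.gcdA u v : ℤ) • (((1 : ℕ) : ZMod m₁), ((0 : ℕ) : ZMod m₂))
      + (Nat.gcdB u v : ℤ) • (((0 : ℕ) : ZMod m₁), ((1 : ℕ) : ZMod m₂)), ?_⟩
    rw [map_add, map_zsmul, map_zsmul, c1, c2]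
    have key : ((Nat.gcd u v : ℤ) : ZMod m)
        = (Nat.gcdA u v : ℤ) • ((u : ℕ) : ZMod m) + (Nat.gcdB u v : ℤ) • ((v : ℕ) : ZMod m) := by
      rw [Nat.gcd_eq_gcd_ab]
      push_cast [zsmul_eq_mul]
      ring
    rw [← key, Nat.Coprime.gcd_eq_one hco]
    norm_num
  intro z
  obtain ⟨w, hw⟩ := hone
  refine ⟨z.val • w, ?_⟩
  rw [map_nsmul, hw, nsmul_eq_mul, mul_one]
  exact ZMod.natCast_rightInverse z
end phi

lemma pair_comp_unif (n T m₁ m₂ m : ℕ) (hn : 0 < n) (hT : 0 < T)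
    (hm₁ : 0 < m₁) (hm₂ : 0 < m₂) (hm : 0 < m)
    (hm₁n : m₁ ∣ n) (hm₂T : m₂ ∣ T) (hmm : m ∣ m₁ * m₂)
    (g₁ : Fin n → ZMod m₁) (g₂ : Fin T → ZMod m₂)
    (h₁ : UnifZ n m₁ g₁) (h₂ : UnifZ T m₂ g₂)
    (φ : ZMod m₁ × ZMod m₂ →+ ZMod m) (hφ : Function.Surjective φ) :
    UnifZ (n * T) m (fun j : Fin (n * T) =>
      φ (g₁ (finProdFinEquiv.symm j).1, g₂ (finProdFinEquiv.symm j).2)) := by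
  haveI : NeZero m₁ := ⟨hm₁.ne'⟩
  haveI : NeZero m₂ := ⟨hm₂.ne'⟩
  haveI : NeZero m := ⟨hm.ne'⟩
  intro c
  have step1 : (univ.filter fun j : Fin (n * T) =>
        φ (g₁ (finProdFinEquiv.symm j).1, g₂ (finProdFinEquiv.symm j).2) = c).card
      = (univ.filter fun x : Fin n × Fin T => φ (g₁ x.1, g₂ x.2) = c).card := by
    rw [← card_filter_equiv (finProdFinEquiv : Fin n × Fin T ≃ Fin (n * T))
      (fun j => φ (g₁ (finProdFinEquiv.symm j).1, g₂ (finProdFinEquiv.symm j).2) = c)]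
    congr 1
    apply Finset.filter_congr
    intro x _
    rw [Equiv.symm_apply_apply]
  have pairfiber : ∀ d : ZMod m₁ × ZMod m₂,
      (univ.filter fun x : Fin n × Fin T => (g₁ x.1, g₂ x.2) = d).card
        = (n / m₁) * (T / m₂) := by
    intro d
    have : (univ.filter fun x : Fin n × Fin T => (g₁ x.1, g₂ x.2) = d)
        = (univ.filter fun x : Fin n × Fin T => g₁ x.1 = d.1 ∧ g₂ x.2 = d.2) := by
      apply Finset.filter_congr
      intro x _
      constructor
      · intro h; rw [← h]; exact ⟨rfl, rfl⟩
      · rintro ⟨ha, hb⟩; rw [Prod.ext_iff]; exact ⟨ha, hb⟩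
    rw [this, ← Finset.univ_product_univ,
      Finset.filter_product (fun a => g₁ a = d.1) (fun b => g₂ b = d.2), Finset.card_product,
      h₁ d.1, h₂ d.2]
  have step2 : (univ.filter fun x : Fin n × Fin T => φ (g₁ x.1, g₂ x.2) = c).card
      = ∑ d ∈ univ.filter (fun d : ZMod m₁ × ZMod m₂ => φ d = c),
          (univ.filter fun x : Fin n × Fin T => (g₁ x.1, g₂ x.2) = d).card := by
    rw [Finset.card_eq_sum_card_fiberwise
      (f := fun x : Fin n × Fin T => (g₁ x.1, g₂ x.2))
      (t := univ.filter (fun d : ZMod m₁ × ZMod m₂ => φ d = c))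
      (fun x hx => by
        simp only [mem_coe, mem_filter, mem_univ, true_and] at hx ⊢
        exact hx)]
    apply Finset.sum_congr rfl
    intro d hd
    simp only [mem_filter, mem_univ, true_and] at hd
    congr 1
    rw [Finset.filter_filter]
    apply Finset.filter_congr
    intro x _
    constructor
    · rintro ⟨_, h⟩; exact h
    · intro h; exact ⟨by rw [h]; exact hd, h⟩
  rw [step1, step2]
  rw [Finset.sum_congr rfl (fun d _ => pairfiber d), Finset.sum_const, smul_eq_mul]
  rw [hom_fiber φ hφ c]
  rw [Fintype.card_prod, ZMod.card, ZMod.card, ZMod.card]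
  rw [Nat.div_mul_div_comm hm₁n hm₂T]
  rw [Nat.div_mul_div_comm hmm (mul_dvd_mul hm₁n hm₂T)]
  rw [show m₁ * m₂ * (n * T) = (m₁ * m₂) * (n * T) by ring,
    show m * (m₁ * m₂) = (m₁ * m₂) * m by ring]
  rw [Nat.mul_div_mul_left _ _ (Nat.mul_pos hm₁ hm₂)]

lemma card_filter_iff {α β : Type*} [Fintype α] [Fintype β] (e : α ≃ β)
    (q : β → Prop) (p : α → Prop) [DecidablePred p] [DecidablePred q]
    (h : ∀ x : α, q (e x) ↔ p x) :
    (univ.filter q).card = (univ.filter p).card := by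
  rw [← card_filter_equiv e q]
  congr 1
  apply Finset.filter_congr
  intro x _
  exact h x


noncomputable def ordL : (L : List ℕ) → Fin L.prod → ℕ
  | [], _ => 1
  | n :: t, i =>
      Nat.lcm (n / Nat.gcd (((finProdFinEquiv (m := n) (n := t.prod)).symm i).1 : ℕ) n)
        (ordL t ((finProdFinEquiv (m := n) (n := t.prod)).symm i).2)

lemma combine (n T : ℕ) (hn : 0 < n) (hT : 0 < T) (m₁ m₂ : ℕ) (hm₁ : 0 < m₁) (hm₂ : 0 < m₂)
    (hm₁d : m₁ ∣ n) (hm₂d : m₂ ∣ T)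
    (A : Matrix (Fin n) (Fin n) ℂ) (B : Matrix (Fin T) (Fin T) ℂ) (i : Fin (n * T))
    (g₁ : Fin n → ZMod m₁) (g₂ : Fin T → ZMod m₂) (hu₁ : UnifZ n m₁ g₁) (hu₂ : UnifZ T m₂ g₂)
    (hv₁ : ∀ j, A (finProdFinEquiv.symm i).1 j = ((1 / Real.sqrt (n : ℕ) : ℝ) : ℂ) *
        Complex.exp (2 * Real.pi * Complex.I * (((g₁ j).val : ℕ) : ℂ) / (m₁ : ℂ)))
    (hv₂ : ∀ j, B (finProdFinEquiv.symm i).2 j = ((1 / Real.sqrt T : ℝ) : ℂ) *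
        Complex.exp (2 * Real.pi * Complex.I * (((g₂ j).val : ℕ) : ℂ) / (m₂ : ℂ))) :
    ∃ g : Fin (n * T) → ZMod (Nat.lcm m₁ m₂), UnifZ (n * T) (Nat.lcm m₁ m₂) g ∧
      ∀ j, kron A B i j = ((1 / Real.sqrt ((n * T : ℕ) : ℝ) : ℝ) : ℂ) *
        Complex.exp (2 * Real.pi * Complex.I * (((g j).val : ℕ) : ℂ) / ((Nat.lcm m₁ m₂ : ℕ) : ℂ)) := by
  set m := Nat.lcm m₁ m₂ with hmdef
  have hm : 0 < m := Nat.lcm_pos hm₁ hm₂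
  have hd₁ : m₁ ∣ m := Nat.dvd_lcm_left _ _
  have hd₂ : m₂ ∣ m := Nat.dvd_lcm_right _ _
  haveI : NeZero m := ⟨hm.ne'⟩
  haveI : NeZero m₁ := ⟨hm₁.ne'⟩
  haveI : NeZero m₂ := ⟨hm₂.ne'⟩
  have hφs : Function.Surjective (phiHom m₁ m₂ m hd₁ hd₂) :=
    phiHom_surj m₁ m₂ m hm₁ hm₂ hm hmdef hd₁ hd₂
  refine ⟨fun j => phiHom m₁ m₂ m hd₁ hd₂ (g₁ (finProdFinEquiv.symm j).1, g₂ (finProdFinEquiv.symm j).2), ?_, ?_⟩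
  · exact pair_comp_unif n T m₁ m₂ m hn hT hm₁ hm₂ hm hm₁d hm₂d
      (Nat.lcm_dvd (Dvd.intro m₂ rfl) (Dvd.intro_left m₁ rfl)) g₁ g₂ hu₁ hu₂ _ hφs
  · intro j
    show A (finProdFinEquiv.symm i).1 (finProdFinEquiv.symm j).1
        * B (finProdFinEquiv.symm i).2 (finProdFinEquiv.symm j).2 = _
    rw [hv₁, hv₂]
    set v₁ := (g₁ (finProdFinEquiv.symm j).1).val with hv₁def
    set v₂ := (g₂ (finProdFinEquiv.symm j).2).val with hv₂def
    have hmm₁ : (m₁ : ℂ) * ((m / m₁ : ℕ) : ℂ) = (m : ℂ) := by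
      exact_mod_cast congrArg (Nat.cast (R := ℂ)) (Nat.mul_div_cancel' hd₁)
    have hmm₂ : (m₂ : ℂ) * ((m / m₂ : ℕ) : ℂ) = (m : ℂ) := by
      exact_mod_cast congrArg (Nat.cast (R := ℂ)) (Nat.mul_div_cancel' hd₂)
    have hm₁0 : (m₁ : ℂ) ≠ 0 := Nat.cast_ne_zero.mpr hm₁.ne'
    have hm₂0 : (m₂ : ℂ) ≠ 0 := Nat.cast_ne_zero.mpr hm₂.ne'
    have hm0 : (m : ℂ) ≠ 0 := Nat.cast_ne_zero.mpr hm.ne'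
    have hsqrt : ((1 / Real.sqrt n : ℝ) : ℂ) * ((1 / Real.sqrt T : ℝ) : ℂ)
        = ((1 / Real.sqrt ((n * T : ℕ) : ℝ) : ℝ) : ℂ) := by
      rw [← Complex.ofReal_mul]
      congr 1
      rw [div_mul_div_comm, one_mul, ← Real.sqrt_mul (by positivity), Nat.cast_mul]
    have hexp : Complex.exp (2 * Real.pi * Complex.I * (v₁ : ℂ) / m₁)
        * Complex.exp (2 * Real.pi * Complex.I * (v₂ : ℂ) / m₂)
        = Complex.exp (2 * Real.pi * Complex.I
            * ((v₁ * (m / m₁) + v₂ * (m / m₂) : ℕ) : ℂ) / m) := by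
      rw [← Complex.exp_add]
      congr 1
      rw [div_add_div _ _ hm₁0 hm₂0, div_eq_div_iff (mul_ne_zero hm₁0 hm₂0) hm0]
      push_cast
      linear_combination (-(2 * (Real.pi : ℂ) * Complex.I * (v₁ : ℂ) * (m₂ : ℂ))) * hmm₁
        - (2 * (Real.pi : ℂ) * Complex.I * (v₂ : ℂ) * (m₁ : ℂ)) * hmm₂
    have hgval : phiHom m₁ m₂ m hd₁ hd₂ (g₁ (finProdFinEquiv.symm j).1, g₂ (finProdFinEquiv.symm j).2)
        = ((v₁ * (m / m₁) + v₂ * (m / m₂) : ℕ) : ZMod m) := by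
      rw [show g₁ (finProdFinEquiv.symm j).1 = ((v₁ : ℕ) : ZMod m₁) from (ZMod.natCast_rightInverse _).symm,
        show g₂ (finProdFinEquiv.symm j).2 = ((v₂ : ℕ) : ZMod m₂) from (ZMod.natCast_rightInverse _).symm]
      exact phiHom_apply m₁ m₂ m hd₁ hd₂ v₁ v₂
    calc ((1 / Real.sqrt n : ℝ) : ℂ) * Complex.exp (2 * Real.pi * Complex.I * (v₁ : ℂ) / m₁)
          * (((1 / Real.sqrt T : ℝ) : ℂ) * Complex.exp (2 * Real.pi * Complex.I * (v₂ : ℂ) / m₂))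
        = (((1 / Real.sqrt n : ℝ) : ℂ) * ((1 / Real.sqrt T : ℝ) : ℂ))
          * (Complex.exp (2 * Real.pi * Complex.I * (v₁ : ℂ) / m₁)
            * Complex.exp (2 * Real.pi * Complex.I * (v₂ : ℂ) / m₂)) := by ring
      _ = ((1 / Real.sqrt ((n * T : ℕ) : ℝ) : ℝ) : ℂ)
          * Complex.exp (2 * Real.pi * Complex.I
              * (((phiHom m₁ m₂ m hd₁ hd₂ (g₁ (finProdFinEquiv.symm j).1,
                    g₂ (finProdFinEquiv.symm j).2)).val : ℕ) : ℂ) / (m : ℂ)) := by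
        rw [hsqrt, hexp, hgval, ZMod.val_natCast, ← exp_ratio m hm]

lemma main_lemma : ∀ (L : List ℕ), (∀ n ∈ L, 0 < n) → ∀ i : Fin L.prod,
    (0 < ordL L i ∧ ordL L i ∣ L.prod) ∧
    ∃ g : Fin L.prod → ZMod (ordL L i), UnifZ L.prod (ordL L i) g ∧
      ∀ j, kronFourier L i j = ((1 / Real.sqrt (L.prod) : ℝ) : ℂ) *
        Complex.exp (2 * Real.pi * Complex.I * (((g j).val : ℕ) : ℂ) / (ordL L i : ℕ)) := by
  intro L
  induction L with
  | nil =>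
    intro _ i
    have hord : ordL [] i = 1 := rfl
    haveI : Subsingleton (Fin (List.prod ([] : List ℕ))) := by
      show Subsingleton (Fin 1); infer_instance
    refine ⟨⟨by rw [hord]; norm_num, by rw [hord]; exact one_dvd _⟩, fun _ => 0, ?_, ?_⟩
    · intro c
      have hc : c = (0 : ZMod (ordL [] i)) := by
        haveI : Subsingleton (ZMod (ordL [] i)) := by
          rw [hord]; infer_instance
        exact Subsingleton.elim _ _
      subst hc
      rw [Finset.filter_true_of_mem (fun _ _ => rfl)]
      show Fintype.card (Fin (List.prod ([] : List ℕ))) = _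
      rw [Fintype.card_fin, hord]
      norm_num
    · intro j
      have hij : i = j := Subsingleton.elim _ _
      subst hij
      show (1 : Matrix (Fin (List.prod ([] : List ℕ))) (Fin (List.prod ([] : List ℕ))) ℂ) i i = _
      rw [Matrix.one_apply_eq]
      have h0 : ((fun _ : Fin (List.prod ([] : List ℕ)) => (0 : ZMod (ordL [] i))) i).val = 0 := by
        rw [hord] at *
        rfl
      rw [h0, hord]
      norm_num
  | cons n t ih =>
    intro hL i
    have hn : 0 < n := hL n List.mem_cons_self
    have hT : 0 < t.prod := List.prod_pos (fun x hx => hL x (List.mem_cons_of_mem _ hx))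
    obtain ⟨g₁, hg₁u, hg₁v⟩ :=
      fourier_row n hn ((finProdFinEquiv (m := n) (n := t.prod)).symm i).1
    obtain ⟨⟨hm₂, hm₂d⟩, g₂, hg₂u, hg₂v⟩ :=
      ih (fun x hx => hL x (List.mem_cons_of_mem _ hx))
        ((finProdFinEquiv (m := n) (n := t.prod)).symm i).2
    have hG0 : 0 < Nat.gcd (((finProdFinEquiv (m := n) (n := t.prod)).symm i).1 : ℕ) n :=
      Nat.gcd_pos_of_pos_right _ hn
    have hm₁ : 0 < n / Nat.gcd (((finProdFinEquiv (m := n) (n := t.prod)).symm i).1 : ℕ) n :=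
      Nat.div_pos (Nat.le_of_dvd hn (Nat.gcd_dvd_right _ _)) hG0
    have hm₁d : n / Nat.gcd (((finProdFinEquiv (m := n) (n := t.prod)).symm i).1 : ℕ) n ∣ n :=
      Nat.div_dvd_of_dvd (Nat.gcd_dvd_right _ _)
    have hcomb := combine n t.prod hn hT _ _ hm₁ hm₂ hm₁d hm₂d
      (Fourier n) (kronFourier t) i g₁ g₂ hg₁u hg₂u hg₁v hg₂v
    exact ⟨⟨Nat.lcm_pos hm₁ hm₂,
      Nat.lcm_dvd (hm₁d.trans (dvd_mul_right _ _)) (hm₂d.trans (dvd_mul_left _ _))⟩, hcomb⟩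

lemma cond_iff (a n i : ℕ) (ha : 0 < a) (hn : 0 < n) (han : a ∣ n) :
    n / Nat.gcd i n ∣ a ↔ n / a ∣ i := by
  have hg : Nat.gcd i n ∣ n := Nat.gcd_dvd_right _ _
  have hgp : 0 < Nat.gcd i n := Nat.gcd_pos_of_pos_right _ hn
  rw [Nat.div_dvd_iff_dvd_mul hg hgp, Nat.div_dvd_iff_dvd_mul han ha]
  constructor
  · intro h
    calc n ∣ Nat.gcd i n * a := h
      _ ∣ i * a := mul_dvd_mul_right (Nat.gcd_dvd_left _ _) a
      _ = a * i := mul_comm _ _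
  · intro h
    have h2 : n ∣ Nat.gcd (a * i) (a * n) :=
      Nat.dvd_gcd h (dvd_mul_left n a)
    rw [Nat.gcd_mul_left] at h2
    calc n ∣ a * Nat.gcd i n := h2
      _ = Nat.gcd i n * a := mul_comm _ _

lemma comp_count_dvd (a n : ℕ) (ha : 0 < a) (hn : 0 < n) (han : a ∣ n) :
    (univ.filter fun i₁ : Fin n => n / Nat.gcd (i₁ : ℕ) n ∣ a).card = a := by
  have hd : 0 < n / a := Nat.div_pos (Nat.le_of_dvd hn han) ha
  have hdn : n / a ∣ n := Nat.div_dvd_of_dvd han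
  haveI : NeZero (n / a) := ⟨hd.ne'⟩
  have key : ∀ i₁ : Fin n, (n / Nat.gcd (i₁ : ℕ) n ∣ a)
      ↔ (((i₁ : ℕ) : ZMod (n / a)) = 0) := by
    intro i₁
    rw [cond_iff a n _ ha hn han, ZMod.natCast_eq_zero_iff]
  rw [Finset.filter_congr (fun i _ => key i), natcast_unif n (n / a) hn hd hdn 0,
    Nat.div_div_self han hn.ne']

lemma comp_count_one (n : ℕ) (hn : 0 < n) :
    (univ.filter fun i₁ : Fin n => n / Nat.gcd (i₁ : ℕ) n = 1).card = 1 := by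
  haveI : NeZero n := ⟨hn.ne'⟩
  have key : ∀ i₁ : Fin n, (n / Nat.gcd (i₁ : ℕ) n = 1)
      ↔ (((i₁ : ℕ) : ZMod n) = 0) := by
    intro i₁
    rw [← Nat.dvd_one, cond_iff 1 n _ one_pos hn (one_dvd n), Nat.div_one,
      ZMod.natCast_eq_zero_iff]
  rw [Finset.filter_congr (fun i _ => key i), natcast_unif n n hn hn dvd_rfl 0, Nat.div_self hn]

lemma count_dvd_a (a : ℕ) (ha : 0 < a) : ∀ (L : List ℕ), (∀ n ∈ L, 0 < n ∧ a ∣ n) →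
    (univ.filter fun i : Fin L.prod => ordL L i ∣ a).card = a ^ L.length := by
  intro L
  induction L with
  | nil =>
    intro _
    rw [Finset.filter_true_of_mem (fun i _ => show ordL [] i ∣ a from
      (show ordL [] i = 1 from rfl) ▸ one_dvd a), Finset.card_univ]
    show Fintype.card (Fin (List.prod [])) = a ^ 0
    rw [Fintype.card_fin]
    simp
  | cons n t ih =>
    intro hL
    have hn := hL n List.mem_cons_self
    show (@Finset.filter _ (fun i : Fin (n * t.prod) => ordL (n :: t) i ∣ a) (fun i => Nat.decidable_dvd _ _) univ).card = a ^ (n :: t).length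
    have key : ∀ x : Fin n × Fin t.prod,
        ordL (n :: t) (finProdFinEquiv x) ∣ a
          ↔ ((n / Nat.gcd (x.1 : ℕ) n ∣ a) ∧ (ordL t x.2 ∣ a)) := by
      intro x
      rw [show ordL (n :: t) (finProdFinEquiv x)
          = Nat.lcm (n / Nat.gcd (((finProdFinEquiv (m := n) (n := t.prod)).symm
              (finProdFinEquiv x)).1 : ℕ) n)
            (ordL t ((finProdFinEquiv (m := n) (n := t.prod)).symm (finProdFinEquiv x)).2)
        from rfl, Equiv.symm_apply_apply]
      exact Nat.lcm_dvd_iff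
    rw [@card_filter_iff _ _ _ _ (finProdFinEquiv (m := n) (n := t.prod)) _
      (fun x : Fin n × Fin t.prod => (n / Nat.gcd (x.1 : ℕ) n ∣ a) ∧ (ordL t x.2 ∣ a))
      _ (fun i => Nat.decidable_dvd _ _) (fun x => key x)]
    rw [← Finset.univ_product_univ,
      Finset.filter_product (fun i₁ : Fin n => n / Nat.gcd (i₁ : ℕ) n ∣ a)
        (fun i₂ : Fin t.prod => ordL t i₂ ∣ a),
      Finset.card_product, comp_count_dvd a n ha hn.1 hn.2,
      ih (fun x hx => hL x (List.mem_cons_of_mem _ hx)), List.length_cons, pow_succ,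
      mul_comm]

lemma count_one : ∀ (L : List ℕ), (∀ n ∈ L, 0 < n) →
    (univ.filter fun i : Fin L.prod => ordL L i = 1).card = 1 := by
  intro L
  induction L with
  | nil =>
    intro _
    rw [Finset.filter_true_of_mem (fun i _ => show ordL [] i = 1 from rfl), Finset.card_univ]
    show Fintype.card (Fin (List.prod [])) = 1
    rw [Fintype.card_fin]
    rfl
  | cons n t ih =>
    intro hL
    have hn := hL n List.mem_cons_self
    show (@Finset.filter _ (fun i : Fin (n * t.prod) => ordL (n :: t) i = 1) (fun i => instDecidableEqNat _ _) univ).card = 1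
    have key : ∀ x : Fin n × Fin t.prod,
        ordL (n :: t) (finProdFinEquiv x) = 1
          ↔ ((n / Nat.gcd (x.1 : ℕ) n = 1) ∧ (ordL t x.2 = 1)) := by
      intro x
      rw [show ordL (n :: t) (finProdFinEquiv x)
          = Nat.lcm (n / Nat.gcd (((finProdFinEquiv (m := n) (n := t.prod)).symm
              (finProdFinEquiv x)).1 : ℕ) n)
            (ordL t ((finProdFinEquiv (m := n) (n := t.prod)).symm (finProdFinEquiv x)).2)
        from rfl, Equiv.symm_apply_apply]
      constructor
      · intro h
        exact ⟨Nat.dvd_one.mp (h ▸ Nat.dvd_lcm_left _ _),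
          Nat.dvd_one.mp (h ▸ Nat.dvd_lcm_right _ _)⟩
      · rintro ⟨h1, h2⟩
        rw [h1, h2]
        exact Nat.lcm_self 1
    rw [@card_filter_iff _ _ _ _ (finProdFinEquiv (m := n) (n := t.prod)) _
      (fun x : Fin n × Fin t.prod => (n / Nat.gcd (x.1 : ℕ) n = 1) ∧ (ordL t x.2 = 1))
      _ (fun i => instDecidableEqNat _ _) (fun x => key x)]
    rw [← Finset.univ_product_univ,
      Finset.filter_product (fun i₁ : Fin n => n / Nat.gcd (i₁ : ℕ) n = 1)
        (fun i₂ : Fin t.prod => ordL t i₂ = 1),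
      Finset.card_product, comp_count_one n hn,
      ih (fun x hx => hL x (List.mem_cons_of_mem _ hx))]

lemma rowvals_char (N n m : ℕ) (hN : 0 < N) (hn : 0 < n) (hm : 0 < m) (hmN : m ∣ N)
    (g : Fin N → ZMod m) (hg : UnifZ N m g) (v : Fin N → ℂ)
    (hv : ∀ j, v j = ((1 / Real.sqrt N : ℝ) : ℂ) *
        Complex.exp (2 * Real.pi * Complex.I * (((g j).val : ℕ) : ℂ) / (m : ℂ))) :
    RowVals N n v ↔ ∀ t : Fin n, (if n ∣ (t : ℕ) * m then N / m else 0) = N / n := by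
  haveI : NeZero m := ⟨hm.ne'⟩
  unfold RowVals
  apply forall_congr'
  intro t
  have hc0 : ((1 / Real.sqrt N : ℝ) : ℂ) ≠ 0 := by
    rw [Complex.ofReal_ne_zero]
    have : (0:ℝ) < Real.sqrt N := Real.sqrt_pos.mpr (by exact_mod_cast hN)
    positivity
  have heq : ∀ j, (v j = ((1 / Real.sqrt N : ℝ) : ℂ) *
      Complex.exp (2 * Real.pi * Complex.I * ((t : ℕ) : ℂ) / n))
        ↔ n * (g j).val = (t : ℕ) * m := by
    intro j
    rw [hv j, mul_right_inj' hc0]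
    exact exp_eq_exp_iff m n (g j).val t hm hn (ZMod.val_lt _) t.2
  have hfib : (Finset.univ.filter fun j =>
      v j = ((1 / Real.sqrt N : ℝ) : ℂ) *
        Complex.exp (2 * Real.pi * Complex.I * ((t : ℕ) : ℂ) / n)).card
      = (if n ∣ (t : ℕ) * m then N / m else 0) := by
    by_cases hd : n ∣ (t : ℕ) * m
    · rw [if_pos hd]
      set r := ((t : ℕ) * m) / n with hr
      have hnr : n * r = (t : ℕ) * m := Nat.mul_div_cancel' hd
      have hrm : r < m := by
        have : n * r < n * m := by
          rw [hnr]
          exact (Nat.mul_lt_mul_right hm).mpr t.2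
        exact lt_of_mul_lt_mul_left this (Nat.zero_le n)
      have key : ∀ j, (v j = ((1 / Real.sqrt N : ℝ) : ℂ) *
          Complex.exp (2 * Real.pi * Complex.I * ((t : ℕ) : ℂ) / n)) ↔ g j = ((r : ℕ) : ZMod m) := by
        intro j
        rw [heq j, ← hnr]
        constructor
        · intro h
          have hval : (g j).val = r := Nat.eq_of_mul_eq_mul_left hn h
          rw [← hval]
          exact (ZMod.natCast_rightInverse _).symm
        · intro h
          rw [h, ZMod.val_natCast, Nat.mod_eq_of_lt hrm]
      rw [Finset.filter_congr (fun j _ => key j)]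
      exact hg _
    · rw [if_neg hd]
      rw [Finset.card_eq_zero, Finset.filter_eq_empty_iff]
      intro j _
      rw [heq j]
      intro h
      exact hd ⟨(g j).val, h.symm⟩
  rw [hfib]

lemma rowvals_one (N m : ℕ) (hN : 0 < N) (hm : 0 < m) (hmN : m ∣ N)
    (g : Fin N → ZMod m) (hg : UnifZ N m g) (v : Fin N → ℂ)
    (hv : ∀ j, v j = ((1 / Real.sqrt N : ℝ) : ℂ) *
        Complex.exp (2 * Real.pi * Complex.I * (((g j).val : ℕ) : ℂ) / (m : ℂ))) :
    RowVals N 1 v ↔ m = 1 := by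
  rw [rowvals_char N 1 m hN one_pos hm hmN g hg v hv]
  constructor
  · intro h
    have h0 := h 0
    rw [if_pos (one_dvd _), Nat.div_one] at h0
    calc m = N / (N / m) := (Nat.div_div_self hmN hN.ne').symm
      _ = N / N := by rw [h0]
      _ = 1 := Nat.div_self hN
  · intro h t
    rw [h, if_pos (one_dvd _)]

lemma rowvals_prime (N m a : ℕ) (hN : 0 < N) (hm : 0 < m) (hmN : m ∣ N) (ha : 2 ≤ a)
    (g : Fin N → ZMod m) (hg : UnifZ N m g) (v : Fin N → ℂ)
    (hv : ∀ j, v j = ((1 / Real.sqrt N : ℝ) : ℂ) *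
        Complex.exp (2 * Real.pi * Complex.I * (((g j).val : ℂ)) / (m : ℂ))) :
    RowVals N a v ↔ m = a := by
  rw [rowvals_char N a m hN (by omega) hm hmN g hg v hv]
  have hNm : 0 < N / m := Nat.div_pos (Nat.le_of_dvd hN hmN) hm
  constructor
  · intro h
    have h0 := h ⟨0, by omega⟩
    rw [show ((⟨0, by omega⟩ : Fin a) : ℕ) = 0 from rfl, zero_mul,
      if_pos (dvd_zero a)] at h0
    have h1 := h ⟨1, by omega⟩
    rw [show ((⟨1, by omega⟩ : Fin a) : ℕ) = 1 from rfl, one_mul] at h1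
    by_cases hd : a ∣ m
    · calc m = N / (N / m) := (Nat.div_div_self hmN hN.ne').symm
        _ = N / (N / a) := by rw [h0]
        _ = a := Nat.div_div_self (hd.trans hmN) hN.ne'
    · rw [if_neg hd] at h1
      omega
  · intro h t
    rw [h, if_pos (dvd_mul_left a (t : ℕ))]

/-- a pure ordered FFKP with `s` factors has `a^s − 1` rows of type
`(a,1)` and exactly one row of type `(a,0)`. -/
theorem stmt10 (a : ℕ) (ha : a.Prime) (ks : List ℕ) (hk : ∀ k ∈ ks, 1 ≤ k)
    (hsort : ks.Pairwise (· ≥ ·)) :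
    countRows ((ks.map (a ^ ·)).prod) (a ^ 1) (kronFourier (ks.map (a ^ ·)))
        = a ^ ks.length - 1 ∧
    countRows ((ks.map (a ^ ·)).prod) (a ^ 0) (kronFourier (ks.map (a ^ ·))) = 1 := by
  classical
  have ha2 : 2 ≤ a := ha.two_le
  have hapos : 0 < a := by omega
  have hLpos : ∀ n ∈ ks.map (a ^ ·), 0 < n := by
    intro n hn
    obtain ⟨k, hkmem, rfl⟩ := List.mem_map.mp hn
    exact pow_pos hapos k
  have hLboth : ∀ n ∈ ks.map (a ^ ·), 0 < n ∧ a ∣ n := by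
    intro n hn
    obtain ⟨k, hkmem, rfl⟩ := List.mem_map.mp hn
    exact ⟨pow_pos hapos k, dvd_pow_self a (by have := hk k hkmem; omega)⟩
  have hN : 0 < (ks.map (a ^ ·)).prod := List.prod_pos hLpos
  have hchar_a : ∀ i, RowVals (ks.map (a ^ ·)).prod a (kronFourier (ks.map (a ^ ·)) i)
      ↔ ordL (ks.map (a ^ ·)) i = a := by
    intro i
    obtain ⟨⟨hm, hmd⟩, g, hu, hval⟩ := main_lemma _ hLpos i
    exact rowvals_prime _ _ a hN hm hmd ha2 g hu _ hval
  have hchar_1 : ∀ i, RowVals (ks.map (a ^ ·)).prod 1 (kronFourier (ks.map (a ^ ·)) i)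
      ↔ ordL (ks.map (a ^ ·)) i = 1 := by
    intro i
    obtain ⟨⟨hm, hmd⟩, g, hu, hval⟩ := main_lemma _ hLpos i
    exact rowvals_one _ _ hN hm hmd g hu _ hval
  constructor
  · rw [pow_one]
    unfold countRows
    rw [Finset.filter_congr (fun i _ => hchar_a i)]
    have hsplit : (Finset.univ.filter fun i => ordL (ks.map (a ^ ·)) i ∣ a)
        = (Finset.univ.filter fun i => ordL (ks.map (a ^ ·)) i = 1)
          ∪ (Finset.univ.filter fun i => ordL (ks.map (a ^ ·)) i = a) := by
      rw [← Finset.filter_or]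
      apply Finset.filter_congr
      intro i _
      exact Nat.dvd_prime ha
    have hdisj : Disjoint (Finset.univ.filter fun i => ordL (ks.map (a ^ ·)) i = 1)
        (Finset.univ.filter fun i => ordL (ks.map (a ^ ·)) i = a) := by
      rw [Finset.disjoint_left]
      intro i h1 h2
      rw [Finset.mem_filter] at h1 h2
      omega
    have hcount := count_dvd_a a hapos (ks.map (a ^ ·)) hLboth
    rw [hsplit, Finset.card_union_of_disjoint hdisj, count_one _ hLpos,
      List.length_map] at hcount
    omega
  · rw [pow_zero]
    unfold countRows
    rw [Finset.filter_congr (fun i _ => hchar_1 i)]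
    exact count_one _ hLpos
end
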